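/- Any biconnected graph can be obtained by starting from a cycle graph H and successively adding 'ears': simple paths P whose two endpoints (and only those) lie in the current graph H; conversely, every graph obtained by this process is biconnected. -/

import Mathlib

open scoped Classical

/-- An OTIMAPP path set: `n` agents, agent `i` follows the path
`loc i 0, loc i 1, ..., loc i (L i)`; `loc i 0` is its start and `loc i (L i)` its goal. -/
structure OTI (V : Type) (n : ℕ) where
  L : Fin n → ℕ
  loc : Fin n → ℕ → V

namespace OTI

variable {V : Type} {n : ℕ}

/-- Activation of agent `i` in configuration `c` (clocks): the agent advances iff it is not
at the end of its path and its next vertex is unoccupied. -/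
noncomputable def step (P : OTI V n) (c : Fin n → ℕ) (i : Fin n) : Fin n → ℕ :=
  if c i < P.L i ∧ ∀ j, j ≠ i → P.loc j (c j) ≠ P.loc i (c i + 1)
  then Function.update c i (c i + 1) else c

/-- Configuration after the first `k` activations of execution `e`. -/
noncomputable def run (P : OTI V n) (e : ℕ → Fin n) : ℕ → Fin n → ℕ
  | 0 => fun _ => 0
  | k + 1 => P.step (P.run e k) (e k)

/-- An execution is fair when every agent is activated infinitely often. -/
def Fair (e : ℕ → Fin n) : Prop := ∀ (i : Fin n) (k : ℕ), ∃ m, k ≤ m ∧ e m = i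

/-- All agents reach their goals after finitely many activations. -/
def Terminates (P : OTI V n) (e : ℕ → Fin n) : Prop :=
  ∃ k, ∀ i, P.run e k i = P.L i

/-- A feasible OTIMAPP solution: every fair execution terminates. -/
def Feasible (P : OTI V n) : Prop := ∀ e, Fair e → P.Terminates e

/-- A configuration (assignment of clocks) is reachable by some execution. -/
def Reachable (P : OTI V n) (c : Fin n → ℕ) : Prop := ∃ e k, P.run e k = c

/-- A potential cyclic deadlock: distinct agents `σ 0, …, σ k` with clock values `t`
such that each agent's next vertex is the next agent's current vertex, cyclically. -/
def PotentialCyclic (P : OTI V n) {k : ℕ} (σ : Fin (k + 1) → Fin n)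
    (t : Fin (k + 1) → ℕ) : Prop :=
  Function.Injective σ ∧ (∀ m, t m < P.L (σ m)) ∧
    ∀ m, P.loc (σ m) (t m + 1) = P.loc (σ (m + 1)) (t (m + 1))

/-- A reachable cyclic deadlock: a potential cyclic deadlock whose clock values are realized
by some reachable configuration. -/
def ReachableCyclic (P : OTI V n) {k : ℕ} (σ : Fin (k + 1) → Fin n)
    (t : Fin (k + 1) → ℕ) : Prop :=
  P.PotentialCyclic σ t ∧ ∃ c, P.Reachable c ∧ ∀ m, c (σ m) = t m

/-- A potential terminal deadlock `(i, j, tj)`: agent `i`'s goal lies on `j`'s path. -/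
def PotentialTerminal (P : OTI V n) (i j : Fin n) (tj : ℕ) : Prop :=
  i ≠ j ∧ tj ≤ P.L j ∧ P.loc i (P.L i) = P.loc j tj

/-- A reachable terminal deadlock: some execution puts `i` at its goal and `j` at clock `tj - 1`. -/
def ReachableTerminal (P : OTI V n) (i j : Fin n) (tj : ℕ) : Prop :=
  P.PotentialTerminal i j tj ∧ ∃ c, P.Reachable c ∧ c i = P.L i ∧ c j + 1 = tj

/-- The path set is a set of paths on graph `G` with starts `s` and goals `g`. -/
def OnGraph (P : OTI V n) (G : SimpleGraph V) (s g : Fin n → V) : Prop :=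
  (∀ i, P.loc i 0 = s i) ∧ (∀ i, P.loc i (P.L i) = g i) ∧
    ∀ i t, t < P.L i → G.Adj (P.loc i t) (P.loc i (t + 1))

/-- A fragment: a nonempty chain of (agent, clock) pairs with distinct agents, where each
agent's next vertex equals the next agent's current vertex. -/
def IsFragment (P : OTI V n) (l : List (Fin n × ℕ)) : Prop :=
  l ≠ [] ∧ (l.map Prod.fst).Nodup ∧ (∀ p ∈ l, p.2 < P.L p.1) ∧
    l.Chain' fun p q => P.loc p.1 (p.2 + 1) = P.loc q.1 q.2

/-- The vertex a fragment starts from. -/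
def fragStart (P : OTI V n) (l : List (Fin n × ℕ)) : Option V :=
  l.head?.map fun p => P.loc p.1 p.2

/-- The vertex a fragment ends at. -/
def fragEnd (P : OTI V n) (l : List (Fin n × ℕ)) : Option V :=
  l.getLast?.map fun p => P.loc p.1 (p.2 + 1)

end OTI

/-- A graph is biconnected: at least 3 vertices, connected, and it remains connected after
removal of any single vertex. -/
def Biconnected {V : Type} [Fintype V] (G : SimpleGraph V) : Prop :=
  3 ≤ Fintype.card V ∧ G.Connected ∧
    ∀ v : V, (G.induce {w : V | w ≠ v}).Connected

/-- The subgraph is a single cycle. -/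
def IsCycleSub {V : Type} {G : SimpleGraph V} (H : G.Subgraph) : Prop :=
  ∃ (u : V) (w : G.Walk u u), w.IsCycle ∧ H = w.toSubgraph

/-- An ear addition: attach a simple path of length ≥ 1 whose two endpoints (and only
those) lie in the current subgraph, and whose edges are all new. -/
def EarStep {V : Type} {G : SimpleGraph V} (H H' : G.Subgraph) : Prop :=
  ∃ (u v : V) (w : G.Walk u v), w.IsPath ∧ 1 ≤ w.length ∧
    u ∈ H.verts ∧ v ∈ H.verts ∧
    (∀ x ∈ w.support, x ≠ u → x ≠ v → x ∉ H.verts) ∧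
    (∀ e ∈ w.edges, e ∉ H.edgeSet) ∧
    H' = H ⊔ w.toSubgraph

namespace EarDec
open SimpleGraph Walk
variable {V : Type} {G : SimpleGraph V}

/-- Transfer a walk with support in `s` to the induced graph. -/
lemma reachable_induce_of_walk {s : Set V} :
    ∀ {a b : V} (w : G.Walk a b) (_ : ∀ x ∈ w.support, x ∈ s) (ha : a ∈ s) (hb : b ∈ s),
      (G.induce s).Reachable ⟨a, ha⟩ ⟨b, hb⟩ := by
  intro a b w
  induction w with
  | nil => intro _ ha hb; exact Reachable.refl _
  | @cons a c b h p ih =>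
    intro hs ha hb
    have hc : c ∈ s := hs c (by simp)
    refine Reachable.trans ?_ (ih (fun x hx => hs x (by simp [hx])) hc hb)
    exact (SimpleGraph.Adj.reachable (by exact h : (G.induce s).Adj ⟨a, ha⟩ ⟨c, hc⟩))

/-- From reachability in the induced graph, get a walk in `G` supported in `s`. -/
lemma walk_of_reachable_induce {s : Set V} {a b : V} (ha : a ∈ s) (hb : b ∈ s)
    (h : (G.induce s).Reachable ⟨a, ha⟩ ⟨b, hb⟩) :
    ∃ w : G.Walk a b, ∀ x ∈ w.support, x ∈ s := by
  obtain ⟨w⟩ := h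
  let f : G.induce s →g G := ⟨Subtype.val, fun h => h⟩
  refine ⟨w.map f, ?_⟩
  intro x hx
  rw [Walk.support_map, List.mem_map] at hx
  obtain ⟨y, _, rfl⟩ := hx
  exact y.2


/-- Truncate a path at the first vertex lying in `s`. -/
lemma exists_prefix_to_set (s : Set V) {a b : V} (w : G.Walk a b) (hw : w.IsPath) (hb : b ∈ s) :
      ∃ (c : V) (r : G.Walk a c), r.IsPath ∧ c ∈ s ∧
        (∀ x ∈ r.support, x ≠ c → x ∉ s) ∧ (∀ x ∈ r.support, x ∈ w.support) := by
  induction w with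
  | nil =>
    exact ⟨_, Walk.nil, Walk.IsPath.nil, hb,
      fun x hx hxc => by simp at hx; exact absurd hx hxc, fun x hx => hx⟩
  | @cons a c b h p ih =>
    by_cases has : a ∈ s
    · exact ⟨a, Walk.nil, Walk.IsPath.nil, has,
        fun x hx hxc => by simp at hx; exact absurd hx hxc,
        fun x hx => by simp at hx; simp [hx]⟩
    · obtain ⟨d, r, hr, hd, hfirst, hsub⟩ := ih ((Walk.cons_isPath_iff _ _).1 hw).1 hb
      have hna : a ∉ r.support := fun hc => ((Walk.cons_isPath_iff _ _).1 hw).2 (hsub a hc)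
      refine ⟨d, Walk.cons h r, hr.cons hna, hd, ?_, ?_⟩
      · intro x hx hxd
        rw [Walk.support_cons, List.mem_cons] at hx
        rcases hx with rfl | hx
        · exact has
        · exact hfirst x hx hxd
      · intro x hx
        rw [Walk.support_cons, List.mem_cons] at hx
        rcases hx with rfl | hx
        · simp
        · simp [hsub x hx]

/-- A walk from inside `s` to outside `s` crosses the boundary. -/
lemma exists_boundary_edge {s : Set V} {a b : V} (w : G.Walk a b) (ha : a ∈ s) (hb : b ∉ s) :
      ∃ y x, y ∈ s ∧ x ∉ s ∧ G.Adj y x := by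
  induction w with
  | nil => exact absurd ha hb
  | @cons a c b h p ih =>
    by_cases hcs : c ∈ s
    · exact ih hcs hb
    · exact ⟨a, c, ha, hcs, h⟩

/-- From a vertex on a path, one can reach an endpoint of the path avoiding `zv ≠ x`. -/
lemma path_avoid {u v' x zv : V} [DecidableEq V] {w : G.Walk u v'} (hw : w.IsPath)
    (hx : x ∈ w.support) (hxz : x ≠ zv) :
    ∃ a, (a = u ∨ a = v') ∧ a ≠ zv ∧ ∃ q : G.Walk x a,
      (∀ y ∈ q.support, y ∈ w.support) ∧ zv ∉ q.support := by
  by_cases hz1 : zv ∈ (w.takeUntil x hx).support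
  · have happ : w.support = (w.takeUntil x hx).support ++ (w.dropUntil x hx).support.tail := by
      conv_lhs => rw [← w.take_spec hx]
      exact Walk.support_append _ _
    have hnd := hw.support_nodup
    rw [happ, List.nodup_append] at hnd
    have hz2 : zv ∉ (w.dropUntil x hx).support := by
      rw [(w.dropUntil x hx).support_eq_cons, List.mem_cons]
      rintro (rfl | hmem)
      · exact hxz rfl
      · exact hnd.2.2 _ hz1 _ hmem rfl
    exact ⟨v', Or.inr rfl, fun hEq => hz2 (hEq ▸ Walk.end_mem_support _), w.dropUntil x hx,
      fun y hy => w.support_dropUntil_subset hx hy, hz2⟩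
  · refine ⟨u, Or.inl rfl, fun hEq => hz1 (hEq ▸ Walk.start_mem_support _),
      (w.takeUntil x hx).reverse, fun y hy => w.support_takeUntil_subset hx
        (by rwa [Walk.support_reverse, List.mem_reverse] at hy), ?_⟩
    rw [Walk.support_reverse, List.mem_reverse]; exact hz1

/-- In a closed walk, support membership is support-tail membership. -/
lemma mem_support_tail_of_closed {u t : V} {c : G.Walk u u} (hnil : ¬c.Nil)
    (ht : t ∈ c.support) : t ∈ c.support.tail := by
  rw [c.support_eq_cons, List.mem_cons] at ht
  rcases ht with rfl | h
  · cases c with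
    | nil => exact absurd Walk.Nil.nil hnil
    | cons h p => simp [Walk.end_mem_support p]
  · exact h

/-- Between any two vertices of a cycle there is an arc avoiding any third vertex. -/
lemma cycle_avoid {u x y zv : V} [DecidableEq V] {c : G.Walk u u} (hc : c.IsCycle)
    (hx : x ∈ c.support) (hy : y ∈ c.support) (hxz : x ≠ zv) (hyz : y ≠ zv) :
    ∃ q : G.Walk x y, (∀ t ∈ q.support, t ∈ c.support) ∧ zv ∉ q.support := by
  rcases eq_or_ne x y with rfl | hxy
  · exact ⟨Walk.nil, fun t ht => by simp at ht; exact ht ▸ hx, by simpa using hxz.symm⟩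
  have hc' : (c.rotate x hx).IsCycle := hc.rotate hx
  have hmemiff : ∀ t : V, t ∈ (c.rotate x hx).support ↔ t ∈ c.support := by
    intro t
    have hrot := c.support_rotate x hx
    constructor
    · intro h
      have := mem_support_tail_of_closed (by
        intro hn; exact hc'.not_nil hn) h
      rw [hrot.mem_iff] at this
      exact List.mem_of_mem_tail this
    · intro h
      have := mem_support_tail_of_closed (by intro hn; exact hc.not_nil hn) h
      rw [← hrot.mem_iff] at this
      exact List.mem_of_mem_tail this
  have hy' : y ∈ (c.rotate x hx).support := (hmemiff y).2 hy
  set c' := c.rotate x hx with hc'def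
  by_cases hz1 : zv ∈ (c'.takeUntil y hy').support
  · -- use the second arc, reversed
    have happ : c'.support.tail
        = (c'.takeUntil y hy').support.tail ++ (c'.dropUntil y hy').support.tail := by
      conv_lhs => rw [← c'.take_spec hy']
      exact Walk.tail_support_append _ _
    have hnd := hc'.support_nodup
    rw [happ, List.nodup_append] at hnd
    have hz1t : zv ∈ (c'.takeUntil y hy').support.tail := by
      have := (c'.takeUntil y hy').support_eq_cons
      rw [this, List.mem_cons] at hz1
      rcases hz1 with rfl | h
      · exact absurd rfl hxz
      · exact h
    have hz2 : zv ∉ (c'.dropUntil y hy').support := by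
      rw [(c'.dropUntil y hy').support_eq_cons, List.mem_cons]
      rintro (rfl | hmem)
      · exact hyz rfl
      · exact hnd.2.2 _ hz1t _ hmem rfl
    refine ⟨(c'.dropUntil y hy').reverse, fun t ht => ?_, ?_⟩
    · rw [Walk.support_reverse, List.mem_reverse] at ht
      exact (hmemiff t).1 (c'.support_dropUntil_subset hy' ht)
    · rw [Walk.support_reverse, List.mem_reverse]; exact hz2
  · refine ⟨c'.takeUntil y hy', fun t ht => (hmemiff t).1 (c'.support_takeUntil_subset hy' ht), hz1⟩

variable {V : Type} {G : SimpleGraph V} [DecidableEq V]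

/-- Ear-decomposition statement, up to a given subgraph. -/
def Decomp (G : SimpleGraph V) (K : G.Subgraph) : Prop :=
  ∃ (m : ℕ) (H : Fin (m + 1) → G.Subgraph),
    IsCycleSub (H 0) ∧ (∀ k : Fin m, EarStep (H k.castSucc) (H k.succ)) ∧
    H (Fin.last m) = K

/-- The connectivity invariant: any two vertices of `K` distinct from `zv` are joined
by a walk inside `K.verts` avoiding `zv`. -/
def Qinv (G : SimpleGraph V) (K : G.Subgraph) : Prop :=
  ∀ zv x y, x ∈ K.verts → y ∈ K.verts → x ≠ zv → y ≠ zv →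
    ∃ w : G.Walk x y, (∀ t ∈ w.support, t ∈ K.verts) ∧ zv ∉ w.support

lemma qinv_of_cycle {K : G.Subgraph} (h : IsCycleSub K) : Qinv G K := by
  obtain ⟨u, c, hc, rfl⟩ := h
  intro zv x y hx hy hxz hyz
  rw [Walk.mem_verts_toSubgraph] at hx hy
  obtain ⟨q, hq1, hq2⟩ := cycle_avoid hc hx hy hxz hyz
  exact ⟨q, fun t ht => (Walk.mem_verts_toSubgraph c).2 (hq1 t ht), hq2⟩

lemma qinv_earStep {K K' : G.Subgraph} (hQ : Qinv G K) (h : EarStep K K') : Qinv G K' := by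
  obtain ⟨u, v, w, hw, hlen, hu, hv, hint, hedge, rfl⟩ := h
  intro zv x y hx hy hxz hyz
  rw [SimpleGraph.Subgraph.verts_sup, Set.mem_union, Walk.mem_verts_toSubgraph] at hx hy
  have hvertsub : ∀ t, t ∈ w.support → t ∈ (K ⊔ w.toSubgraph).verts := fun t ht => by
    rw [SimpleGraph.Subgraph.verts_sup, Set.mem_union, Walk.mem_verts_toSubgraph]
    exact Or.inr ht
  have hKsub : ∀ t, t ∈ K.verts → t ∈ (K ⊔ w.toSubgraph).verts := fun t ht => by
    rw [SimpleGraph.Subgraph.verts_sup, Set.mem_union]; exact Or.inl ht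
  -- reduce a vertex of K' to a vertex of K by walking along the ear
  have reduce : ∀ t, (t ∈ K.verts ∨ t ∈ w.support) → t ≠ zv →
      ∃ a, a ∈ K.verts ∧ a ≠ zv ∧ ∃ q : G.Walk t a,
        (∀ s ∈ q.support, s ∈ (K ⊔ w.toSubgraph).verts) ∧ zv ∉ q.support := by
    intro t ht htz
    rcases ht with ht | ht
    · exact ⟨t, ht, htz, Walk.nil, fun s hs => by
        simp only [Walk.support_nil, List.mem_singleton] at hs
        exact hs ▸ hKsub t ht, by simpa using htz.symm⟩
    · obtain ⟨a, ha, haz, q, hq1, hq2⟩ := path_avoid hw ht htz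
      refine ⟨a, ?_, haz, q, fun s hs => hvertsub s (hq1 s hs), hq2⟩
      rcases ha with rfl | rfl
      · exact hu
      · exact hv
  obtain ⟨a, haK, haz, q1, hq11, hq12⟩ := reduce x hx hxz
  obtain ⟨b, hbK, hbz, q2, hq21, hq22⟩ := reduce y hy hyz
  obtain ⟨q3, hq31, hq32⟩ := hQ zv a b haK hbK haz hbz
  refine ⟨q1.append (q3.append q2.reverse), fun t ht => ?_, fun ht => ?_⟩
  · rw [Walk.mem_support_append_iff] at ht
    rcases ht with ht | ht
    · exact hq11 t ht
    · rw [Walk.mem_support_append_iff] at ht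
      rcases ht with ht | ht
      · exact hKsub t (hq31 t ht)
      · rw [Walk.support_reverse, List.mem_reverse] at ht
        exact hq21 t ht
  · rw [Walk.mem_support_append_iff] at ht
    rcases ht with ht | ht
    · exact hq12 ht
    · rw [Walk.mem_support_append_iff] at ht
      rcases ht with ht | ht
      · exact hq32 ht
      · rw [Walk.support_reverse, List.mem_reverse] at ht
        exact hq22 ht

lemma qinv_of_decomp {K : G.Subgraph} (h : Decomp G K) : Qinv G K := by
  obtain ⟨m, H, hcyc, hear, rfl⟩ := h
  suffices h : ∀ k (hk : k < m + 1), Qinv G (H ⟨k, hk⟩) from h m (Nat.lt_succ_self m)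
  intro k
  induction k with
  | zero => intro hk; exact qinv_of_cycle hcyc
  | succ k ih =>
    intro hk
    have hkm : k < m := Nat.lt_of_succ_lt_succ hk
    have := hear ⟨k, hkm⟩
    exact qinv_earStep (ih (Nat.lt_of_lt_of_le hkm (Nat.le_succ m))) this

lemma walk_avoid (hdel : ∀ v : V, (G.induce {w : V | w ≠ v}).Connected) {v x y : V}
    (hx : x ≠ v) (hy : y ≠ v) : ∃ w : G.Walk x y, v ∉ w.support := by
  have h := ((hdel v).preconnected ⟨x, hx⟩ ⟨y, hy⟩)
  obtain ⟨w, hw⟩ := walk_of_reachable_induce (s := {w : V | w ≠ v}) hx hy h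
  exact ⟨w, fun hv => (hw v hv) rfl⟩

lemma earStep_measure {K K' : G.Subgraph} (h : EarStep K K') :
    K.verts ⊆ K'.verts ∧ K.edgeSet ⊂ K'.edgeSet := by
  obtain ⟨u, v, w, hw, hlen, hu, hv, hint, hedge, rfl⟩ := h
  refine ⟨fun t ht => by rw [SimpleGraph.Subgraph.verts_sup]; exact Or.inl ht, ?_, ?_⟩
  · intro e he; rw [SimpleGraph.Subgraph.edgeSet_sup]; exact Or.inl he
  · intro hsub
    have hne : w.edges ≠ [] := by
      intro h0
      have := w.length_edges
      rw [h0] at this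
      simp at this
      omega
    obtain ⟨e, hemem⟩ := List.exists_mem_of_ne_nil _ hne
    have he' : e ∈ (K ⊔ w.toSubgraph).edgeSet := by
      rw [SimpleGraph.Subgraph.edgeSet_sup]
      exact Or.inr ((w.mem_edges_toSubgraph).2 hemem)
    exact hedge e hemem (hsub he')

lemma decomp_snoc {K K' : G.Subgraph} (h : Decomp G K) (he : EarStep K K') : Decomp G K' := by
  obtain ⟨m, H, h0, hstep, hlast⟩ := h
  refine ⟨m + 1, Fin.snoc H K', ?_, ?_, ?_⟩
  · have : ((0 : Fin (m + 2))) = Fin.castSucc 0 := rfl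
    rw [this, Fin.snoc_castSucc]
    exact h0
  · intro k
    refine Fin.lastCases ?_ ?_ k
    · rw [Fin.succ_last, Fin.snoc_last, Fin.snoc_castSucc, hlast]
      exact he
    · intro j
      rw [Fin.succ_castSucc, Fin.snoc_castSucc, Fin.snoc_castSucc]
      exact hstep j
  · rw [Fin.snoc_last]

lemma exists_ear (hconn : G.Connected)
    (hdel : ∀ v : V, (G.induce {w : V | w ≠ v}).Connected)
    {K : G.Subgraph} (hKne : K ≠ ⊤)
    (htwo : ∃ a b, a ∈ K.verts ∧ b ∈ K.verts ∧ a ≠ b) :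
    ∃ K', EarStep K K' := by
  obtain ⟨a, b, haK, hbK, hab⟩ := htwo
  by_cases hV : K.verts = Set.univ
  · -- all vertices present; find a missing edge
    have hEne : K.edgeSet ≠ G.edgeSet := by
      intro hE
      apply hKne
      apply SimpleGraph.Subgraph.ext
      · rw [SimpleGraph.Subgraph.verts_top]; exact hV
      · funext x y
        apply propext
        rw [SimpleGraph.Subgraph.top_adj]
        constructor
        · intro h; exact K.adj_sub h
        · intro h
          rw [← SimpleGraph.Subgraph.mem_edgeSet, hE, SimpleGraph.mem_edgeSet]
          exact h
    obtain ⟨e, heG, heK⟩ := Set.exists_of_ssubset (ssubset_of_subset_of_ne K.edgeSet_subset hEne)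
    induction e using Sym2.ind with
    | _ x y =>
      have hadj : G.Adj x y := heG
      refine ⟨_, x, y, Walk.cons hadj Walk.nil, ?_, by simp, ?_, ?_, ?_, ?_, rfl⟩
      · rw [Walk.cons_isPath_iff]
        exact ⟨Walk.IsPath.nil, by simp [hadj.ne]⟩
      · rw [hV]; trivial
      · rw [hV]; trivial
      · intro t ht htx hty
        simp only [Walk.support_cons, Walk.support_nil, List.mem_cons, List.mem_singleton] at ht
        rcases ht with rfl | rfl | h
        · exact absurd rfl htx
        · exact absurd rfl hty
        · simp at h
      · intro e' he'
        simp only [Walk.edges_cons, Walk.edges_nil, List.mem_singleton] at he'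
        rw [he']
        exact heK
  · -- some vertex is missing: grow an ear through it
    obtain ⟨x₀, hx₀⟩ := (Set.ne_univ_iff_exists_notMem _).1 hV
    obtain ⟨p⟩ := hconn.preconnected a x₀
    obtain ⟨y, x, hyK, hxK, hyx⟩ := exists_boundary_edge p haK hx₀
    set z : V := if a = y then b else a with hz
    have hzK : z ∈ K.verts := by rw [hz]; split <;> assumption
    have hzy : z ≠ y := by
      rw [hz]; split
      · rename_i hay; rw [← hay]; exact hab.symm
      · assumption
    have hxy : x ≠ y := fun h => hxK (h ▸ hyK)
    obtain ⟨q, hq⟩ := walk_avoid hdel hxy hzy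
    have hp'path : q.bypass.IsPath := q.bypass_isPath
    have hp'y : y ∉ q.bypass.support := fun h => hq (q.support_bypass_subset h)
    obtain ⟨c, r, hr, hcK, hfirst, hsub⟩ := exists_prefix_to_set K.verts q.bypass hp'path hzK
    have hyr : y ∉ r.support := fun h => hp'y (hsub y h)
    refine ⟨_, y, c, Walk.cons hyx r, ?_, by simp, hyK, hcK, ?_, ?_, rfl⟩
    · rw [Walk.cons_isPath_iff]; exact ⟨hr, hyr⟩
    · intro t ht hty htc
      rw [Walk.support_cons, List.mem_cons] at ht
      rcases ht with rfl | ht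
      · exact absurd rfl hty
      · exact hfirst t ht htc
    · intro e he
      rw [Walk.edges_cons, List.mem_cons] at he
      rcases he with rfl | he
      · intro hmem
        have : K.Adj y x := (SimpleGraph.Subgraph.mem_edgeSet).1 hmem
        exact hxK (K.edge_vert (K.adj_symm this))
      · induction e using Sym2.ind with
        | _ c₁ c₂ =>
          intro hmem
          have hK : K.Adj c₁ c₂ := (SimpleGraph.Subgraph.mem_edgeSet).1 hmem
          have hc₁s : c₁ ∈ r.support := Walk.fst_mem_support_of_mem_edges r he
          have hc₂s : c₂ ∈ r.support := Walk.snd_mem_support_of_mem_edges r he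
          have hc₁ : c₁ = c := by
            by_contra hne
            exact hfirst c₁ hc₁s hne (K.edge_vert hK)
          have hc₂ : c₂ = c := by
            by_contra hne
            exact hfirst c₂ hc₂s hne (K.edge_vert (K.adj_symm hK))
          rw [hc₁, hc₂] at hK
          exact G.irrefl (K.adj_sub hK)

lemma decomp_grow [Fintype V] (hconn : G.Connected)
    (hdel : ∀ v : V, (G.induce {w : V | w ≠ v}).Connected) :
    ∀ (N : ℕ) (K : G.Subgraph), Decomp G K →
      (∃ a b, a ∈ K.verts ∧ b ∈ K.verts ∧ a ≠ b) →
      Fintype.card V + G.edgeSet.ncard - (K.verts.ncard + K.edgeSet.ncard) ≤ N →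
      Decomp G ⊤ := by
  have hbound : ∀ K : G.Subgraph, K.verts.ncard + K.edgeSet.ncard
      ≤ Fintype.card V + G.edgeSet.ncard := by
    intro K
    have h1 : K.verts.ncard ≤ Fintype.card V := by
      have := Set.ncard_le_ncard (Set.subset_univ K.verts) Set.finite_univ
      rwa [Set.ncard_univ, Nat.card_eq_fintype_card] at this
    have h2 : K.edgeSet.ncard ≤ G.edgeSet.ncard :=
      Set.ncard_le_ncard K.edgeSet_subset (Set.toFinite _)
    omega
  intro N
  induction N with
  | zero =>
    intro K hd htwo hle
    by_cases hK : K = ⊤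
    · exact hK ▸ hd
    · exfalso
      obtain ⟨K', hear⟩ := exists_ear hconn hdel hK htwo
      obtain ⟨hvsub, hesub⟩ := earStep_measure hear
      have h1 : K.verts.ncard ≤ K'.verts.ncard := Set.ncard_le_ncard hvsub (Set.toFinite _)
      have h2 : K.edgeSet.ncard < K'.edgeSet.ncard := Set.ncard_lt_ncard hesub (Set.toFinite _)
      have := hbound K'
      omega
  | succ N ih =>
    intro K hd htwo hle
    by_cases hK : K = ⊤
    · exact hK ▸ hd
    · obtain ⟨K', hear⟩ := exists_ear hconn hdel hK htwo
      obtain ⟨hvsub, hesub⟩ := earStep_measure hear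
      have h1 : K.verts.ncard ≤ K'.verts.ncard := Set.ncard_le_ncard hvsub (Set.toFinite _)
      have h2 : K.edgeSet.ncard < K'.edgeSet.ncard := Set.ncard_lt_ncard hesub (Set.toFinite _)
      obtain ⟨a, b, haK, hbK, hab⟩ := htwo
      exact ih K' (decomp_snoc hd hear) ⟨a, b, hvsub haK, hvsub hbK, hab⟩ (by omega)

end EarDec

open SimpleGraph Walk

/-- open ear decomposition: a graph is biconnected iff it can be obtained
from a cycle graph by successively adding ears. -/
theorem biconnected_iff_ear_decomposition {V : Type} [Fintype V] [DecidableEq V]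
    (G : SimpleGraph V) :
    Biconnected G ↔
      ∃ (m : ℕ) (H : Fin (m + 1) → G.Subgraph),
        IsCycleSub (H 0) ∧ (∀ k : Fin m, EarStep (H k.castSucc) (H k.succ)) ∧
        H (Fin.last m) = ⊤ := by
  constructor
  · rintro ⟨hcard, hconn, hdel⟩
    suffices hD : EarDec.Decomp G ⊤ from hD
    -- build a starting cycle
    obtain ⟨u⟩ := Fintype.card_pos_iff.1 (by omega : 0 < Fintype.card V)
    have hnt : Nontrivial V := Fintype.one_lt_card_iff_nontrivial.1 (by omega)
    obtain ⟨z0, hz0⟩ := exists_ne u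
    obtain ⟨p0⟩ := hconn.preconnected u z0
    obtain ⟨v, huv⟩ : ∃ v, G.Adj u v := by
      cases p0 with
      | nil => exact absurd rfl hz0
      | cons h q => exact ⟨_, h⟩
    obtain ⟨z, hzmem, hzu⟩ := Finset.exists_mem_ne
      (s := Finset.univ.erase v) (by
        rw [Finset.card_erase_of_mem (Finset.mem_univ v), Finset.card_univ]; omega) u
    have hzv : z ≠ v := Finset.ne_of_mem_erase hzmem
    obtain ⟨w1, hw1⟩ := EarDec.walk_avoid hdel (huv.ne : u ≠ v) hzv
    cases w1 with
    | nil => exact absurd rfl hzu.symm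
    | @cons _ w₁ _ hadj_uw q =>
      have hw1v : w₁ ≠ v := by
        intro hE
        apply hw1
        rw [Walk.support_cons, List.mem_cons]
        exact Or.inr (hE ▸ q.start_mem_support)
      have hw1u : w₁ ≠ u := hadj_uw.ne'
      obtain ⟨q0, hq0⟩ := EarDec.walk_avoid hdel hw1u (huv.ne' : v ≠ u)
      have hp' : q0.bypass.IsPath := q0.bypass_isPath
      have hup' : u ∉ q0.bypass.support := fun h => hq0 (q0.support_bypass_subset h)
      have hqfull : (Walk.cons hadj_uw q0.bypass).IsPath := by
        rw [Walk.cons_isPath_iff]; exact ⟨hp', hup'⟩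
      have hc : (Walk.cons huv.symm (Walk.cons hadj_uw q0.bypass)).IsCycle := by
        rw [Walk.cons_isCycle_iff]
        refine ⟨hqfull, ?_⟩
        rw [Walk.edges_cons, List.mem_cons]
        rintro (hE | hE)
        · rw [Sym2.eq_iff] at hE
          rcases hE with ⟨h1, h2⟩ | ⟨h1, h2⟩
          · exact huv.ne' h1
          · exact hw1v h1.symm
        · exact hup' (Walk.snd_mem_support_of_mem_edges q0.bypass hE)
      set c := Walk.cons huv.symm (Walk.cons hadj_uw q0.bypass) with hcdef
      have hbase : EarDec.Decomp G c.toSubgraph :=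
        ⟨0, fun _ => c.toSubgraph, ⟨v, c, hc, rfl⟩, fun k => k.elim0, rfl⟩
      have htwo : ∃ a b, a ∈ c.toSubgraph.verts ∧ b ∈ c.toSubgraph.verts ∧ a ≠ b := by
        refine ⟨v, u, c.start_mem_verts_toSubgraph, ?_, huv.ne'⟩
        rw [Walk.mem_verts_toSubgraph, hcdef, Walk.support_cons, List.mem_cons]
        exact Or.inr (Walk.start_mem_support _)
      exact EarDec.decomp_grow hconn hdel (Fintype.card V + G.edgeSet.ncard)
        c.toSubgraph hbase htwo (Nat.sub_le _ _)
  · rintro ⟨m, H, hcyc, hear, hlast⟩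
    have hQ : EarDec.Qinv G ⊤ := EarDec.qinv_of_decomp ⟨m, H, hcyc, hear, hlast⟩
    obtain ⟨u0, c, hc, hH0⟩ := hcyc
    have hcard : 3 ≤ Fintype.card V := by
      have h3 := hc.three_le_length
      have hlen := List.Nodup.length_le_card hc.support_nodup
      have hsl : c.support.length = c.length + 1 := c.length_support
      have : c.support.tail.length = c.length := by
        rw [c.support_eq_cons] at hsl
        simpa using Nat.succ_injective hsl
      omega
    have hnt : Nontrivial V := Fintype.one_lt_card_iff_nontrivial.1 (by omega)
    have hmemtop : ∀ t : V, t ∈ (⊤ : G.Subgraph).verts := by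
      intro t; rw [SimpleGraph.Subgraph.verts_top]; trivial
    have hconn : G.Connected := by
      rw [connected_iff]
      refine ⟨?_, Fintype.card_pos_iff.1 (by omega)⟩
      intro x y
      rcases eq_or_ne x y with rfl | hxy
      · exact Reachable.refl x
      · obtain ⟨zv, hzmem, hzy⟩ := Finset.exists_mem_ne
          (s := Finset.univ.erase x) (by
            rw [Finset.card_erase_of_mem (Finset.mem_univ x), Finset.card_univ]; omega) y
        have hzx : zv ≠ x := Finset.ne_of_mem_erase hzmem
        obtain ⟨w, -, -⟩ := hQ zv x y (hmemtop x) (hmemtop y) hzx.symm hzy.symm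
        exact ⟨w⟩
    refine ⟨hcard, hconn, ?_⟩
    intro v
    rw [connected_iff]
    constructor
    · rintro ⟨x, hx⟩ ⟨y, hy⟩
      obtain ⟨w, -, hwv⟩ := hQ v x y (hmemtop x) (hmemtop y) hx hy
      exact EarDec.reachable_induce_of_walk (s := {w : V | w ≠ v}) w
        (fun t ht hE => hwv (by rw [← hE]; exact ht)) hx hy
    · exact ⟨⟨(exists_ne v).choose, (exists_ne v).choose_spec⟩⟩
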